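/- arXiv:1506.04174 — 2 statements merged into one kernel-verified Lean document; each statement's English description precedes it below -/
import Mathlib

section
/- For the map σ_γ defined from a Dyck path γ of length 2n by σ_γ(i) = i + l_i/2 − h_i (where h_i is the height after the i-th up-step and l_i the length of the excursion started by the i-th up-step), if i < j and the j-th excursion is contained in the i-th excursion then σ_γ(j) < σ_γ(i), and if the two excursions are disjoint then σ_γ(i) < σ_γ(j). -/
/-- A Dyck path of length `2n`, as a function `ℕ → ℤ`. -/
def IsDyckPathFn (n : ℕ) (γ : ℕ → ℤ) : Prop :=
  γ 0 = 0 ∧ γ (2 * n) = 0 ∧ (∀ x, x ≤ 2 * n → 0 ≤ γ x) ∧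
    (∀ x, x < 2 * n → γ (x + 1) = γ x + 1 ∨ γ (x + 1) = γ x - 1)

/-- The sorted list of positions in `[1, 2n]` reached by an up-step of `γ`. -/
def upPositions (n : ℕ) (γ : ℕ → ℤ) : List ℕ :=
  ((Finset.Icc 1 (2 * n)).filter (fun x => γ x = γ (x - 1) + 1)).sort (· ≤ ·)

/-- `vPos n γ i` is the position just after the `i`-th up-step of `γ`. -/
def vPos (n : ℕ) (γ : ℕ → ℤ) (i : ℕ) : ℕ := (upPositions n γ).getD (i - 1) 0

/-- The height of `γ` just after its `i`-th up-step. -/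
def hgt (n : ℕ) (γ : ℕ → ℤ) (i : ℕ) : ℤ := γ (vPos n γ i)

/-- The length of the excursion of `γ` started by its `i`-th up-step: the least
`l ≥ 1` with `γ (vPos i - 1 + l) = hgt i - 1`. -/
noncomputable def excLen (n : ℕ) (γ : ℕ → ℤ) (i : ℕ) : ℕ :=
  sInf {l : ℕ | 1 ≤ l ∧ γ (vPos n γ i - 1 + l) = hgt n γ i - 1}

/-- The 231-avoiding permutation associated to a Dyck path:
`σ_γ i = i + l_i / 2 - h_i`. -/
noncomputable def perm231 (n : ℕ) (γ : ℕ → ℤ) (i : ℕ) : ℤ :=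
  (i : ℤ) + ((excLen n γ i / 2 : ℕ) : ℤ) - hgt n γ i

/-- Number of up-steps of `γ` at positions in `[1, x]`. -/
def upCnt (γ : ℕ → ℤ) (x : ℕ) : ℕ :=
  ((Finset.Icc 1 x).filter (fun k => γ k = γ (k - 1) + 1)).card

lemma upCnt_formula (n : ℕ) (γ : ℕ → ℤ) (hγ : IsDyckPathFn n γ) :
    ∀ x, x ≤ 2 * n → 2 * (upCnt γ x : ℤ) = x + γ x := by
  intro x
  induction x with
  | zero => intro _; simp [upCnt, hγ.1]
  | succ x ih =>
    intro hx
    have hx' : x < 2 * n := by omega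
    have hins : Finset.Icc 1 (x + 1) = insert (x + 1) (Finset.Icc 1 x) := by
      ext k
      simp only [Finset.mem_Icc, Finset.mem_insert]
      omega
    have hnm : (x + 1) ∉ Finset.Icc 1 x := by simp
    have hih := ih (by omega)
    have hx1 : (x + 1) - 1 = x := by omega
    rcases hγ.2.2.2 x hx' with hup | hdn
    · have hP : γ (x + 1) = γ ((x + 1) - 1) + 1 := by rw [hx1]; exact hup
      have : upCnt γ (x + 1) = upCnt γ x + 1 := by
        unfold upCnt
        rw [hins, Finset.filter_insert, if_pos hP,
          Finset.card_insert_of_notMem (fun h => hnm (Finset.mem_filter.1 h).1)]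
      rw [this]
      push_cast
      rw [hup]
      linarith
    · have hP : ¬ (γ (x + 1) = γ ((x + 1) - 1) + 1) := by rw [hx1, hdn]; intro h; omega
      have : upCnt γ (x + 1) = upCnt γ x := by
        unfold upCnt
        rw [hins, Finset.filter_insert, if_neg hP]
      rw [this]
      push_cast
      rw [hdn]
      linarith

lemma upCnt_mono (γ : ℕ → ℤ) {a b : ℕ} (h : a ≤ b) : upCnt γ a ≤ upCnt γ b :=
  Finset.card_le_card (Finset.filter_subset_filter _ (Finset.Icc_subset_Icc_right h))

lemma upCnt_le_add (γ : ℕ → ℤ) {a b : ℕ} (h : a ≤ b) :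
    upCnt γ b + a ≤ upCnt γ a + b := by
  have hsub : (Finset.Icc 1 b).filter (fun k => γ k = γ (k - 1) + 1) ⊆
      ((Finset.Icc 1 a).filter (fun k => γ k = γ (k - 1) + 1)) ∪ Finset.Ioc a b := by
    intro k hk
    rw [Finset.mem_filter, Finset.mem_Icc] at hk
    rw [Finset.mem_union, Finset.mem_filter, Finset.mem_Icc, Finset.mem_Ioc]
    rcases le_or_gt k a with h1 | h1
    · exact Or.inl ⟨⟨hk.1.1, h1⟩, hk.2⟩
    · exact Or.inr ⟨h1, hk.1.2⟩
  have h1 := Finset.card_le_card hsub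
  have h2 := Finset.card_union_le
    ((Finset.Icc 1 a).filter (fun k => γ k = γ (k - 1) + 1)) (Finset.Ioc a b)
  have h3 : (Finset.Ioc a b).card = b - a := Nat.card_Ioc a b
  unfold upCnt
  omega

lemma dyck_ivt (n : ℕ) (γ : ℕ → ℤ) (hγ : IsDyckPathFn n γ) :
    ∀ d a (c : ℤ), a + d ≤ 2 * n → γ (a + d) ≤ c → c ≤ γ a →
      ∃ t, a ≤ t ∧ t ≤ a + d ∧ γ t = c := by
  intro d
  induction d with
  | zero => exact fun a c _ h1 h2 => ⟨a, le_refl _, le_refl _, le_antisymm h1 h2⟩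
  | succ d ih =>
    intro a c hle h1 h2
    have he : a + (d + 1) = (a + d) + 1 := rfl
    by_cases hc : γ (a + (d + 1)) = c
    · exact ⟨a + (d + 1), by omega, le_refl _, hc⟩
    · have hstep := hγ.2.2.2 (a + d) (by omega)
      rw [← he] at hstep
      have h3 : γ (a + d) ≤ c := by rcases hstep with h | h <;> omega
      obtain ⟨t, ht1, ht2, ht3⟩ := ih a c (by omega) h3 h2
      exact ⟨t, ht1, by omega, ht3⟩

lemma sorted_filter_le_length {L : List ℕ} (hL : L.Pairwise (· < ·)) (k : ℕ) (hk : k < L.length) :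
    (L.filter (fun a => a ≤ L[k])).length = k + 1 := by
  have hpw := List.pairwise_iff_getElem.1 hL
  set b := L[k] with hb
  have htake : (L.take (k + 1)).filter (fun a => decide (a ≤ b)) = L.take (k + 1) := by
    apply List.filter_eq_self.2
    intro a ha
    obtain ⟨m, hm, rfl⟩ := List.mem_take_iff_getElem.1 ha
    simp only [decide_eq_true_eq]
    rcases Nat.lt_or_ge m k with h | h
    · exact le_of_lt (hpw m k (by omega) hk h)
    · have hmk : m = k := by omega
      subst hmk
      exact le_refl _
  have hdrop : (L.drop (k + 1)).filter (fun a => decide (a ≤ b)) = [] := by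
    rw [List.filter_eq_nil_iff]
    intro a ha
    obtain ⟨m, hm, rfl⟩ := List.mem_drop_iff_getElem.1 ha
    simp only [decide_eq_true_eq]
    have := hpw k (k + 1 + m) hk (by omega) (by omega)
    omega
  calc (L.filter (fun a => a ≤ b)).length
      = ((L.take (k + 1) ++ L.drop (k + 1)).filter (fun a => decide (a ≤ b))).length := by
        rw [List.take_append_drop]
    _ = k + 1 := by
        rw [List.filter_append, htake, hdrop, List.append_nil, List.length_take]
        omega

lemma upPositions_length (n : ℕ) (γ : ℕ → ℤ) (hγ : IsDyckPathFn n γ) :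
    (upPositions n γ).length = n := by
  have h := upCnt_formula n γ hγ (2 * n) (le_refl _)
  rw [hγ.2.1] at h
  have h2 : upCnt γ (2 * n) = n := by push_cast at h; omega
  unfold upPositions
  rw [Finset.length_sort]
  exact h2

lemma vPos_spec (n : ℕ) (γ : ℕ → ℤ) (hγ : IsDyckPathFn n γ) (i : ℕ)
    (hi : i ∈ Finset.Icc 1 n) :
    1 ≤ vPos n γ i ∧ vPos n γ i ≤ 2 * n ∧
      γ (vPos n γ i) = γ (vPos n γ i - 1) + 1 ∧ upCnt γ (vPos n γ i) = i := by
  simp only [Finset.mem_Icc] at hi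
  have hlen := upPositions_length n γ hγ
  have hk : i - 1 < (upPositions n γ).length := by omega
  have hval : vPos n γ i = (upPositions n γ)[i - 1] := List.getD_eq_getElem _ _ hk
  have hmem : vPos n γ i ∈ upPositions n γ := by rw [hval]; exact List.getElem_mem hk
  have hmem' := (Finset.mem_sort (α := ℕ) (· ≤ ·)).1 hmem
  rw [Finset.mem_filter, Finset.mem_Icc] at hmem'
  refine ⟨hmem'.1.1, hmem'.1.2, hmem'.2, ?_⟩
  have hsorted : (upPositions n γ).Pairwise (· < ·) := (Finset.sortedLT_sort _).pairwise
  have hfilter : (Finset.Icc 1 (vPos n γ i)).filter (fun k => γ k = γ (k - 1) + 1) =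
      ((Finset.Icc 1 (2 * n)).filter (fun k => γ k = γ (k - 1) + 1)).filter
        (fun k => k ≤ vPos n γ i) := by
    ext k
    simp only [Finset.mem_filter, Finset.mem_Icc]
    constructor
    · rintro ⟨⟨h1, h2⟩, h3⟩; exact ⟨⟨⟨h1, le_trans h2 hmem'.1.2⟩, h3⟩, h2⟩
    · rintro ⟨⟨⟨h1, _⟩, h3⟩, h4⟩; exact ⟨⟨h1, h4⟩, h3⟩
  unfold upCnt
  rw [hfilter]
  have hnodup : (upPositions n γ).Nodup := Finset.sort_nodup _ _
  have htF : (upPositions n γ).toFinset =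
      (Finset.Icc 1 (2 * n)).filter (fun k => γ k = γ (k - 1) + 1) :=
    Finset.sort_toFinset _ _
  have hcard : (((Finset.Icc 1 (2 * n)).filter (fun k => γ k = γ (k - 1) + 1)).filter
        (fun k => k ≤ vPos n γ i)).card =
      ((upPositions n γ).filter (fun k => decide (k ≤ vPos n γ i))).length := by
    rw [← List.toFinset_card_of_nodup (hnodup.filter _), List.toFinset_filter, htF]
    congr 1
    apply Finset.filter_congr
    intro x _
    simp
  rw [hcard]
  have hlength : ((upPositions n γ).filter
      (fun k => decide (k ≤ (upPositions n γ)[i - 1]))).length = (i - 1) + 1 :=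
    sorted_filter_le_length hsorted (i - 1) hk
  rw [hval]
  rw [hlength]
  omega

lemma vPos_strictMono (n : ℕ) (γ : ℕ → ℤ) (hγ : IsDyckPathFn n γ) {i j : ℕ}
    (hi : i ∈ Finset.Icc 1 n) (hj : j ∈ Finset.Icc 1 n) (hij : i < j) :
    vPos n γ i < vPos n γ j := by
  simp only [Finset.mem_Icc] at hi hj
  have hlen := upPositions_length n γ hγ
  have hki : i - 1 < (upPositions n γ).length := by omega
  have hkj : j - 1 < (upPositions n γ).length := by omega
  have hvi : vPos n γ i = (upPositions n γ)[i - 1] := List.getD_eq_getElem _ _ hki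
  have hvj : vPos n γ j = (upPositions n γ)[j - 1] := List.getD_eq_getElem _ _ hkj
  have hsorted : (upPositions n γ).Pairwise (· < ·) := (Finset.sortedLT_sort _).pairwise
  rw [hvi, hvj]
  exact List.pairwise_iff_getElem.1 hsorted _ _ hki hkj (by omega)

lemma exc_spec (n : ℕ) (γ : ℕ → ℤ) (hγ : IsDyckPathFn n γ) (i : ℕ)
    (hi : i ∈ Finset.Icc 1 n) :
    1 ≤ excLen n γ i ∧ vPos n γ i - 1 + excLen n γ i ≤ 2 * n ∧
      γ (vPos n γ i - 1 + excLen n γ i) = hgt n γ i - 1 ∧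
      (∀ t, 1 ≤ t → t < excLen n γ i → hgt n γ i ≤ γ (vPos n γ i - 1 + t)) := by
  obtain ⟨hv1, hv2, hvup, _⟩ := vPos_spec n γ hγ i hi
  set v := vPos n γ i with hv
  set x := v - 1 with hx
  have hxv : v = x + 1 := by omega
  have hh : hgt n γ i = γ v := rfl
  have hγx : γ x = hgt n γ i - 1 := by rw [hh, hvup]; ring
  have h2n0 : γ (2 * n) = 0 := hγ.2.1
  have hh1 : (1 : ℤ) ≤ hgt n γ i := by
    have h0 := hγ.2.2.1 x (by omega)
    omega
  obtain ⟨t, ht1, ht2, ht3⟩ := dyck_ivt n γ hγ (2 * n - v) v (hgt n γ i - 1)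
    (by omega)
    (by rw [show v + (2 * n - v) = 2 * n by omega, h2n0]; omega)
    (by rw [← hh]; omega)
  have ht2' : t ≤ 2 * n := by omega
  have hEq : excLen n γ i = sInf {l : ℕ | 1 ≤ l ∧ γ (x + l) = hgt n γ i - 1} := rfl
  have hne : (t - x) ∈ {l : ℕ | 1 ≤ l ∧ γ (x + l) = hgt n γ i - 1} :=
    ⟨by omega, by rw [show x + (t - x) = t by omega]; exact ht3⟩
  have hmem := Nat.sInf_mem (Set.nonempty_of_mem hne)
  obtain ⟨hl1, hl2⟩ := hmem
  have hle : sInf {l : ℕ | 1 ≤ l ∧ γ (x + l) = hgt n γ i - 1} ≤ t - x := Nat.sInf_le hne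
  rw [hEq]
  refine ⟨hl1, by omega, hl2, ?_⟩
  intro s hs1 hs2
  by_contra hcon
  push_neg at hcon
  have hγs : γ (x + s) ≤ hgt n γ i - 1 := by omega
  obtain ⟨u, hu1, hu2, hu3⟩ := dyck_ivt n γ hγ (s - 1) v (hgt n γ i - 1)
    (by omega)
    (by rw [show v + (s - 1) = x + s by omega]; exact hγs)
    (by rw [← hh]; omega)
  have hu2' : u ≤ x + s := by omega
  have hmem2 : (u - x) ∈ {l : ℕ | 1 ≤ l ∧ γ (x + l) = hgt n γ i - 1} :=
    ⟨by omega, by rw [show x + (u - x) = u by omega]; exact hu3⟩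
  have := Nat.sInf_le hmem2
  omega

lemma perm_formula (n : ℕ) (γ : ℕ → ℤ) (hγ : IsDyckPathFn n γ) (i : ℕ)
    (hi : i ∈ Finset.Icc 1 n) :
    perm231 n γ i =
        (upCnt γ (vPos n γ i - 1 + excLen n γ i) : ℤ) + 1 - hgt n γ i ∧
      2 ≤ excLen n γ i := by
  obtain ⟨hv1, hv2, hvup, hvcnt⟩ := vPos_spec n γ hγ i hi
  obtain ⟨hl1, hl2, hl3, _⟩ := exc_spec n γ hγ i hi
  simp only [Finset.mem_Icc] at hi
  set v := vPos n γ i with hv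
  set x := v - 1 with hx
  set l := excLen n γ i with hl
  have hxv : v = x + 1 := by omega
  have hh : hgt n γ i = γ v := rfl
  have hγx : γ x = hgt n γ i - 1 := by rw [hh, hvup]; ring
  have f1 := upCnt_formula n γ hγ x (by omega)
  have f2 := upCnt_formula n γ hγ v (by omega)
  have f3 := upCnt_formula n γ hγ (x + l) hl2
  rw [hγx] at f1
  rw [← hh] at f2
  rw [hl3] at f3
  rw [hvcnt] at f2
  -- from f1 and f2 : upCnt γ x = i - 1 (as integers)
  have hxcast : (v : ℤ) = (x : ℤ) + 1 := by exact_mod_cast congrArg (Nat.cast (R := ℤ)) hxv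
  have hUx : (upCnt γ x : ℤ) = (i : ℤ) - 1 := by
    rw [hxcast] at f2; linarith
  have hxl : ((x + l : ℕ) : ℤ) = (x : ℤ) + (l : ℤ) := by push_cast; ring
  have hL : (l : ℤ) = 2 * ((upCnt γ (x + l) : ℤ) - (upCnt γ x : ℤ)) := by
    rw [hxl] at f3; linarith
  have hLnat : l = 2 * (upCnt γ (x + l) - upCnt γ x) ∧ upCnt γ x ≤ upCnt γ (x + l) := by
    constructor
    · omega
    · omega
  have hhalf : ((l / 2 : ℕ) : ℤ) = (upCnt γ (x + l) : ℤ) - ((i : ℤ) - 1) := by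
    rw [← hUx]; omega
  constructor
  · show (i : ℤ) + ((l / 2 : ℕ) : ℤ) - hgt n γ i = (upCnt γ (x + l) : ℤ) + 1 - hgt n γ i
    rw [hhalf]; ring
  · omega

/-- If `i < j` and the `j`-th excursion of `γ` is contained in the `i`-th
excursion then `σ_γ j < σ_γ i`; if the two excursions are disjoint then
`σ_γ i < σ_γ j`. -/
theorem perm231_excursion_order (n : ℕ) (γ : ℕ → ℤ) (hγ : IsDyckPathFn n γ)
    (i j : ℕ) (hi : i ∈ Finset.Icc 1 n) (hj : j ∈ Finset.Icc 1 n) (hij : i < j) :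
    ((vPos n γ i - 1 ≤ vPos n γ j - 1 ∧
        vPos n γ j - 1 + excLen n γ j ≤ vPos n γ i - 1 + excLen n γ i) →
      perm231 n γ j < perm231 n γ i) ∧
    ((vPos n γ i - 1 + excLen n γ i < vPos n γ j - 1) →
      perm231 n γ i < perm231 n γ j) := by
  obtain ⟨hvi1, hvi2, hviup, _⟩ := vPos_spec n γ hγ i hi
  obtain ⟨hvj1, hvj2, hvjup, _⟩ := vPos_spec n γ hγ j hj
  obtain ⟨hli1, hli2, hli3, hliint⟩ := exc_spec n γ hγ i hi
  obtain ⟨hlj1, hlj2, hlj3, _⟩ := exc_spec n γ hγ j hj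
  obtain ⟨hfi, hli2'⟩ := perm_formula n γ hγ i hi
  obtain ⟨hfj, hlj2'⟩ := perm_formula n γ hγ j hj
  have hvij := vPos_strictMono n γ hγ hi hj hij
  have hhj : hgt n γ j = γ (vPos n γ j - 1) + 1 := hvjup
  have hhi : hgt n γ i = γ (vPos n γ i) := rfl
  constructor
  · rintro ⟨hc1, hc2⟩
    -- containment: the j-th excursion lies inside the i-th
    have hxij : vPos n γ i - 1 < vPos n γ j - 1 := by omega
    set t := (vPos n γ j - 1) - (vPos n γ i - 1) with hT
    have ht1 : 1 ≤ t := by omega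
    have ht2 : t < excLen n γ i := by omega
    have hint := hliint t ht1 ht2
    rw [show vPos n γ i - 1 + t = vPos n γ j - 1 by omega] at hint
    have hhij : hgt n γ i + 1 ≤ hgt n γ j := by rw [hhj]; omega
    have hU : upCnt γ (vPos n γ j - 1 + excLen n γ j) ≤
        upCnt γ (vPos n γ i - 1 + excLen n γ i) := upCnt_mono γ hc2
    have hUZ : (upCnt γ (vPos n γ j - 1 + excLen n γ j) : ℤ) ≤
        (upCnt γ (vPos n γ i - 1 + excLen n γ i) : ℤ) := by exact_mod_cast hU
    rw [hfi, hfj]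
    linarith
  · intro hd
    -- disjoint: the i-th excursion ends before the j-th starts
    set a := vPos n γ i - 1 + excLen n γ i with ha
    set b := vPos n γ j - 1 with hb
    set B := vPos n γ j - 1 + excLen n γ j with hB
    have hγb : γ b = hgt n γ j - 1 := by rw [hhj]; ring
    have hb2n : b ≤ 2 * n := by omega
    have fa := upCnt_formula n γ hγ a hli2
    have fb := upCnt_formula n γ hγ b hb2n
    have fB := upCnt_formula n γ hγ B hlj2
    rw [hli3] at fa
    rw [hγb] at fb
    rw [hlj3] at fB
    have hab : a ≤ b := by omega
    have hbd := upCnt_le_add γ hab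
    have hbdZ : (upCnt γ b : ℤ) + (a : ℤ) ≤ (upCnt γ a : ℤ) + (b : ℤ) := by exact_mod_cast hbd
    have hBcast : ((B : ℕ) : ℤ) = (b : ℤ) + (excLen n γ j : ℤ) := by
      rw [hB, hb]; push_cast; ring
    rw [hBcast] at fB
    have hljZ : (2 : ℤ) ≤ (excLen n γ j : ℤ) := by exact_mod_cast hlj2'
    rw [hfi, hfj]
    linarith
end

section
/- Let γ be a Dyck path of length 2n and σ_γ the associated 231-avoiding permutation. Let I ⊂ [n] be an interval of length at most n^{0.49}. If h_i > n^{0.49} for all i ∈ I, then σ_γ has at most one fixed point with index in I. -/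
namespace DyckAux

variable {n : ℕ} {γ : ℕ → ℤ}

/-- The set of up-step positions. -/
def S (n : ℕ) (γ : ℕ → ℤ) : Finset ℕ :=
  (Finset.Icc 1 (2 * n)).filter (fun x => γ x = γ (x - 1) + 1)

lemma upPositions_eq : upPositions n γ = (S n γ).sort (· ≤ ·) := rfl

lemma updown (hγ : IsDyckPathFn n γ) {x : ℕ} (h1 : 1 ≤ x) (h2 : x ≤ 2 * n) :
    γ x = γ (x - 1) + 1 ∨ γ x = γ (x - 1) - 1 := by
  obtain ⟨-, -, -, hstep⟩ := hγ
  have := hstep (x - 1) (by omega)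
  rwa [Nat.sub_add_cancel h1] at this

/-- Height formula: `γ x = 2 * #(up-steps ≤ x) - x`. -/
lemma height_formula (hγ : IsDyckPathFn n γ) :
    ∀ x, x ≤ 2 * n →
      γ x = 2 * (((Finset.Icc 1 x).filter (fun y => γ y = γ (y - 1) + 1)).card : ℤ) - x := by
  intro x
  induction x with
  | zero => intro _; simp [hγ.1]
  | succ x ih =>
    intro hx
    have hx' : x ≤ 2 * n := by omega
    have key : Finset.Icc 1 (x + 1) = insert (x + 1) (Finset.Icc 1 x) := by
      ext y; simp [Finset.mem_Icc, Finset.mem_insert]; omega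
    have hnot : x + 1 ∉ Finset.Icc 1 x := by simp
    rcases updown hγ (by omega) hx with hup | hdown
    · have : ((Finset.Icc 1 (x + 1)).filter (fun y => γ y = γ (y - 1) + 1)).card
          = ((Finset.Icc 1 x).filter (fun y => γ y = γ (y - 1) + 1)).card + 1 := by
        rw [key, Finset.filter_insert, if_pos hup,
          Finset.card_insert_of_notMem (fun h => hnot (Finset.mem_filter.1 h).1)]
      rw [this]
      have := ih hx'
      simp only [Nat.add_sub_cancel] at hup
      push_cast
      omega
    · have : ((Finset.Icc 1 (x + 1)).filter (fun y => γ y = γ (y - 1) + 1)).card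
          = ((Finset.Icc 1 x).filter (fun y => γ y = γ (y - 1) + 1)).card := by
        rw [key, Finset.filter_insert, if_neg]
        intro h
        simp only [Nat.add_sub_cancel] at h hdown
        omega
      rw [this]
      have := ih hx'
      simp only [Nat.add_sub_cancel] at hdown
      push_cast
      omega

lemma card_S (hγ : IsDyckPathFn n γ) : (S n γ).card = n := by
  have := height_formula hγ (2 * n) le_rfl
  rw [hγ.2.1] at this
  have : ((S n γ).card : ℤ) = n := by unfold S; omega
  exact_mod_cast this

lemma length_upPositions (hγ : IsDyckPathFn n γ) : (upPositions n γ).length = n := by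
  rw [upPositions_eq, Finset.length_sort, card_S hγ]

lemma vPos_eq_get (hγ : IsDyckPathFn n γ) {i : ℕ} (h1 : 1 ≤ i) (h2 : i ≤ n) :
    vPos n γ i = (upPositions n γ).get ⟨i - 1, by rw [length_upPositions hγ]; omega⟩ := by
  unfold vPos
  rw [List.getD_eq_getElem _ _ (by rw [length_upPositions hγ]; omega)]
  rfl

lemma vPos_mem_S (hγ : IsDyckPathFn n γ) {i : ℕ} (h1 : 1 ≤ i) (h2 : i ≤ n) :
    vPos n γ i ∈ S n γ := by
  rw [vPos_eq_get hγ h1 h2, ← Finset.mem_sort (α := ℕ) (· ≤ ·)]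
  exact List.get_mem _ _

lemma vPos_props (hγ : IsDyckPathFn n γ) {i : ℕ} (h1 : 1 ≤ i) (h2 : i ≤ n) :
    1 ≤ vPos n γ i ∧ vPos n γ i ≤ 2 * n ∧ γ (vPos n γ i) = γ (vPos n γ i - 1) + 1 := by
  have := vPos_mem_S hγ h1 h2
  simp only [S, Finset.mem_filter, Finset.mem_Icc] at this
  exact ⟨this.1.1, this.1.2, this.2⟩

lemma vPos_strictMono (hγ : IsDyckPathFn n γ) {i j : ℕ} (h1 : 1 ≤ i) (hij : i < j)
    (h2 : j ≤ n) : vPos n γ i < vPos n γ j := by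
  rw [vPos_eq_get hγ h1 (by omega), vPos_eq_get hγ (by omega) h2]
  exact (show (upPositions n γ).SortedLT from Finset.sortedLT_sort _).strictMono_get (by simp [Fin.lt_def]; omega)

/-- Counting: exactly `i` up-steps occur in `[1, vPos i]`. -/
lemma count_up_to_vPos (hγ : IsDyckPathFn n γ) {i : ℕ} (h1 : 1 ≤ i) (h2 : i ≤ n) :
    ((Finset.Icc 1 (vPos n γ i)).filter (fun y => γ y = γ (y - 1) + 1)).card = i := by
  set L := upPositions n γ with hL
  have hlen : L.length = n := length_upPositions hγ
  have hget : vPos n γ i = L.get ⟨i - 1, by omega⟩ := vPos_eq_get hγ h1 h2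
  have hsorted : L.SortedLT := Finset.sortedLT_sort _
  have hmemS : ∀ x, x ∈ S n γ ↔ x ∈ L := fun x => (Finset.mem_sort (α := ℕ) (· ≤ ·)).symm
  -- the filter equals S filtered by ≤ vPos i
  have hv2n : vPos n γ i ≤ 2 * n := (vPos_props hγ h1 h2).2.1
  have hset : (Finset.Icc 1 (vPos n γ i)).filter (fun y => γ y = γ (y - 1) + 1)
      = (S n γ).filter (fun y => y ≤ vPos n γ i) := by
    ext y
    simp only [S, Finset.mem_filter, Finset.mem_Icc]
    constructor
    · rintro ⟨⟨hy1, hy2⟩, hy3⟩; exact ⟨⟨⟨hy1, le_trans hy2 hv2n⟩, hy3⟩, hy2⟩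
    · rintro ⟨⟨⟨hy1, _⟩, hy3⟩, hy2⟩; exact ⟨⟨hy1, hy2⟩, hy3⟩
  rw [hset]
  apply Finset.card_eq_of_bijective (fun j hj => L.get ⟨j, by omega⟩)
  · intro a ha
    rw [Finset.mem_filter] at ha
    obtain ⟨m, hm⟩ := List.mem_iff_get.1 ((hmemS a).1 ha.1)
    refine ⟨m, ?_, hm⟩
    by_contra hmi
    have : L.get ⟨i - 1, by omega⟩ < L.get m :=
      hsorted.strictMono_get (by simp [Fin.lt_def]; omega)
    rw [← hget, hm] at this
    exact absurd ha.2 (not_le.2 this)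
  · intro j hj
    rw [Finset.mem_filter]
    constructor
    · exact (hmemS _).2 (List.get_mem _ _)
    · rw [hget]
      rcases eq_or_lt_of_le (Nat.le_of_lt_succ (by omega : j < (i - 1) + 1)) with h | h
      · exact le_of_eq (congrArg _ (by ext; simp [h]))
      · exact le_of_lt (hsorted.strictMono_get (by simp [Fin.lt_def]; omega))
  · intro a b ha hb hab
    have := hsorted.strictMono_get.injective hab
    simpa using congrArg Fin.val this

lemma hgt_eq (hγ : IsDyckPathFn n γ) {i : ℕ} (h1 : 1 ≤ i) (h2 : i ≤ n) :
    hgt n γ i = 2 * (i : ℤ) - (vPos n γ i : ℤ) := by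
  have hv2n : vPos n γ i ≤ 2 * n := (vPos_props hγ h1 h2).2.1
  have := height_formula hγ (vPos n γ i) hv2n
  rw [count_up_to_vPos hγ h1 h2] at this
  exact this

lemma hgt_pos (hγ : IsDyckPathFn n γ) {i : ℕ} (h1 : 1 ≤ i) (h2 : i ≤ n) :
    1 ≤ hgt n γ i := by
  obtain ⟨hv1, hv2, hup⟩ := vPos_props hγ h1 h2
  have := hγ.2.2.1 (vPos n γ i - 1) (by omega)
  unfold hgt
  omega

/-- Discrete intermediate value theorem (downward crossings). -/
lemma ivt (hγ : IsDyckPathFn n γ) :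
    ∀ k a b, b - a = k → a ≤ b → b ≤ 2 * n → ∀ c : ℤ, γ b ≤ c → c < γ a →
      ∃ x, a < x ∧ x ≤ b ∧ γ x = c := by
  intro k
  induction k using Nat.strong_induction_on with
  | _ k ih =>
    intro a b hk hab hb c hbc hca
    have hne : a ≠ b := by rintro rfl; omega
    have hab' : a < b := lt_of_le_of_ne hab hne
    rcases hγ.2.2.2 a (by omega) with hstep | hstep
    · by_cases hc : γ (a + 1) = c
      · exact ⟨a + 1, by omega, by omega, hc⟩
      · obtain ⟨x, hx1, hx2, hx3⟩ := ih (b - (a + 1)) (by omega) (a + 1) b rfl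
          (by omega) hb c hbc (by omega)
        exact ⟨x, by omega, hx2, hx3⟩
    · by_cases hc : γ (a + 1) = c
      · exact ⟨a + 1, by omega, by omega, hc⟩
      · obtain ⟨x, hx1, hx2, hx3⟩ := ih (b - (a + 1)) (by omega) (a + 1) b rfl
          (by omega) hb c hbc (by omega)
        exact ⟨x, by omega, hx2, hx3⟩

/-- The excursion set is nonempty and stays within `[0, 2n]`. -/
lemma excLen_spec (hγ : IsDyckPathFn n γ) {i : ℕ} (h1 : 1 ≤ i) (h2 : i ≤ n) :
    1 ≤ excLen n γ i ∧ vPos n γ i - 1 + excLen n γ i ≤ 2 * n ∧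
      γ (vPos n γ i - 1 + excLen n γ i) = hgt n γ i - 1 := by
  obtain ⟨hv1, hv2, hup⟩ := vPos_props hγ h1 h2
  have hpos := hgt_pos hγ h1 h2
  obtain ⟨x, hx1, hx2, hx3⟩ := ivt hγ (2 * n - vPos n γ i) (vPos n γ i) (2 * n) rfl
    hv2 le_rfl (hgt n γ i - 1) (by rw [hγ.2.1]; omega) (by unfold hgt; omega)
  have hwit : (x - (vPos n γ i - 1)) ∈
      {l : ℕ | 1 ≤ l ∧ γ (vPos n γ i - 1 + l) = hgt n γ i - 1} := by
    constructor
    · omega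
    · have : vPos n γ i - 1 + (x - (vPos n γ i - 1)) = x := by omega
      rw [this]; exact hx3
  have hne : Set.Nonempty {l : ℕ | 1 ≤ l ∧ γ (vPos n γ i - 1 + l) = hgt n γ i - 1} :=
    ⟨_, hwit⟩
  have hmem := Nat.sInf_mem hne
  have hle : excLen n γ i ≤ x - (vPos n γ i - 1) := Nat.sInf_le hwit
  exact ⟨hmem.1, by unfold excLen at *; omega, hmem.2⟩

/-- Strictly inside the excursion the path stays at height `≥ hgt i`. -/
lemma excursion_min (hγ : IsDyckPathFn n γ) {i : ℕ} (h1 : 1 ≤ i) (h2 : i ≤ n) :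
    ∀ l, 1 ≤ l → l < excLen n γ i → hgt n γ i ≤ γ (vPos n γ i - 1 + l) := by
  obtain ⟨hv1, hv2, hup⟩ := vPos_props hγ h1 h2
  obtain ⟨hl1, hl2, hl3⟩ := excLen_spec hγ h1 h2
  have hne : ∀ l, 1 ≤ l → l < excLen n γ i →
      γ (vPos n γ i - 1 + l) ≠ hgt n γ i - 1 := by
    intro l hl hlt hcon
    have hle : excLen n γ i ≤ l := Nat.sInf_le
      (show l ∈ {l : ℕ | 1 ≤ l ∧ γ (vPos n γ i - 1 + l) = hgt n γ i - 1} from ⟨hl, hcon⟩)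
    omega
  intro l
  induction l with
  | zero => omega
  | succ l ihl =>
    intro _ hlt
    rcases Nat.eq_zero_or_pos l with rfl | hl0
    · have : vPos n γ i - 1 + 1 = vPos n γ i := by omega
      rw [this]; exact le_refl _
    · have ihv := ihl hl0 (by omega)
      have hstep := hγ.2.2.2 (vPos n γ i - 1 + l) (by omega)
      have hne' := hne (l + 1) (by omega) hlt
      have heq : vPos n γ i - 1 + (l + 1) = vPos n γ i - 1 + l + 1 := by omega
      rw [heq] at hne' ⊢
      omega

/-- Parity: `γ b - γ a ≡ b - a (mod 2)`. -/
lemma parity (hγ : IsDyckPathFn n γ) {a b : ℕ} (hab : a ≤ b) (hb : b ≤ 2 * n) :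
    (2 : ℤ) ∣ (γ b - γ a - ((b : ℤ) - (a : ℤ))) := by
  induction b with
  | zero =>
    have : a = 0 := by omega
    subst this; exact ⟨0, by ring⟩
  | succ b ihb =>
    rcases Nat.eq_or_lt_of_le hab with h | h
    · refine ⟨0, ?_⟩; rw [← h]; ring
    · have hb' : b ≤ 2 * n := by omega
      have := ihb (by omega) hb'
      have hstep := hγ.2.2.2 b (by omega)
      obtain ⟨m, hm⟩ := this
      rcases hstep with hs | hs
      · exact ⟨m, by push_cast; omega⟩
      · exact ⟨m - 1, by push_cast; omega⟩

/-- At a fixed point, the excursion length is exactly twice the height. -/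
lemma fixed_point_excLen (hγ : IsDyckPathFn n γ) {i : ℕ} (h1 : 1 ≤ i) (h2 : i ≤ n)
    (hfix : perm231 n γ i = (i : ℤ)) : (excLen n γ i : ℤ) = 2 * hgt n γ i := by
  obtain ⟨hv1, hv2, hup⟩ := vPos_props hγ h1 h2
  obtain ⟨hl1, hl2, hl3⟩ := excLen_spec hγ h1 h2
  have hhalf : ((excLen n γ i / 2 : ℕ) : ℤ) = hgt n γ i := by
    unfold perm231 at hfix; omega
  have hpar := parity hγ (show vPos n γ i ≤ vPos n γ i - 1 + excLen n γ i by omega) hl2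
  rw [hl3] at hpar
  unfold hgt at hpar
  have hdvd : (2 : ℤ) ∣ (excLen n γ i : ℤ) := by
    obtain ⟨m, hm⟩ := hpar
    refine ⟨-m, ?_⟩
    have : ((vPos n γ i - 1 + excLen n γ i : ℕ) : ℤ) = (vPos n γ i : ℤ) - 1 + excLen n γ i := by
      push_cast [hv1]; omega
    rw [this] at hm
    omega
  have hdvd' : 2 ∣ excLen n γ i := by exact_mod_cast hdvd
  have : excLen n γ i / 2 * 2 = excLen n γ i := Nat.div_mul_cancel hdvd'
  have : ((excLen n γ i / 2 : ℕ) : ℤ) * 2 = (excLen n γ i : ℤ) := by exact_mod_cast this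
  omega

/-- Two distinct fixed points in the window lead to a contradiction. -/
lemma no_two_fixed (hγ : IsDyckPathFn n γ) {i j : ℕ} (h1 : 1 ≤ i) (hij : i < j)
    (h2 : j ≤ n) (hi_h : (j : ℤ) - (i : ℤ) < hgt n γ i) (hj_h : (j : ℤ) - (i : ℤ) < hgt n γ j)
    (hfi : perm231 n γ i = (i : ℤ)) (hfj : perm231 n γ j = (j : ℤ)) : False := by
  obtain ⟨hvi1, hvi2, hupi⟩ := vPos_props hγ h1 (by omega)
  obtain ⟨hvj1, hvj2, hupj⟩ := vPos_props hγ (by omega) h2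
  have hhi := hgt_pos hγ h1 (by omega : i ≤ n)
  have hhj := hgt_pos hγ (by omega : 1 ≤ j) h2
  have hvieq := hgt_eq hγ h1 (by omega : i ≤ n)
  have hvjeq := hgt_eq hγ (by omega : 1 ≤ j) h2
  have hli := fixed_point_excLen hγ h1 (by omega) hfi
  have hlj := fixed_point_excLen hγ (by omega) h2 hfj
  obtain ⟨hi1, hi2, hi3⟩ := excLen_spec hγ h1 (by omega : i ≤ n)
  obtain ⟨hj1, hj2, hj3⟩ := excLen_spec hγ (by omega : 1 ≤ j) h2
  have hvmono : vPos n γ i < vPos n γ j := vPos_strictMono hγ h1 hij h2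
  set vi := vPos n γ i
  set vj := vPos n γ j
  set hi := hgt n γ i
  set hj := hgt n γ j
  set li := excLen n γ i
  set lj := excLen n γ j
  -- ti: endpoint of excursion i
  have hli2 : 2 ≤ li := by omega
  by_cases hcase : vj ≤ vi - 1 + li
  · -- Case A: vj inside excursion i
    -- first, vj ≠ ti
    have hvj_ne : vj ≠ vi - 1 + li := by
      intro hEq
      have hprev := excursion_min hγ h1 (by omega : i ≤ n) (li - 1) (by omega) (by omega)
      have : vi - 1 + (li - 1) = vj - 1 := by omega
      rw [this] at hprev
      -- γ vj = γ (vj - 1) + 1 ≥ hi + 1, but γ vj = γ ti = hi - 1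
      rw [hEq] at hupj
      rw [hupj] at hi3
      omega
    -- so vj strictly inside; height there ≥ hi
    have hvj_lt : vj < vi - 1 + li := by omega
    have hin : hi ≤ γ vj := by
      have := excursion_min hγ h1 (by omega : i ≤ n) (vj - (vi - 1)) (by omega) (by omega)
      have heq : vi - 1 + (vj - (vi - 1)) = vj := by omega
      rwa [heq] at this
    have hij_h : hi ≤ hj := hin
    -- tj > ti as integers, hence as naturals
    have htj_gt : vi - 1 + li < vj - 1 + lj := by
      have h1' : ((vi - 1 + li : ℕ) : ℤ) = (vi : ℤ) - 1 + li := by push_cast [hvi1]; omega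
      have h2' : ((vj - 1 + lj : ℕ) : ℤ) = (vj : ℤ) - 1 + lj := by push_cast [hvj1]; omega
      have : ((vi - 1 + li : ℕ) : ℤ) < ((vj - 1 + lj : ℕ) : ℤ) := by
        rw [h1', h2']; omega
      exact_mod_cast this
    -- ti strictly inside excursion j
    have := excursion_min hγ (by omega : 1 ≤ j) h2 ((vi - 1 + li) - (vj - 1))
      (by omega) (by omega)
    have heq : vj - 1 + ((vi - 1 + li) - (vj - 1)) = vi - 1 + li := by omega
    rw [heq] at this
    rw [hi3] at this
    omega
  · -- Case B: vj beyond ti; arithmetic contradiction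
    push_neg at hcase
    have h1' : ((vi - 1 + li : ℕ) : ℤ) = (vi : ℤ) - 1 + li := by push_cast [hvi1]; omega
    have : ((vi - 1 + li : ℕ) : ℤ) < (vj : ℤ) := by exact_mod_cast hcase
    rw [h1'] at this
    omega

end DyckAux

/-- If `I ⊆ [1,n]` is an interval of length at most `n^{0.49}` on which all the
heights `h_i` exceed `n^{0.49}`, then `σ_γ` has at most one fixed point in `I`. -/
theorem perm231_at_most_one_fixed_point (n : ℕ) (γ : ℕ → ℤ)
    (hγ : IsDyckPathFn n γ) (p q : ℕ)
    (hI : Finset.Icc p q ⊆ Finset.Icc 1 n)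
    (hlen : ((Finset.Icc p q).card : ℝ) ≤ (n : ℝ) ^ (0.49 : ℝ))
    (hh : ∀ i ∈ Finset.Icc p q, (n : ℝ) ^ (0.49 : ℝ) < ((hgt n γ i : ℤ) : ℝ)) :
    ((Finset.Icc p q).filter (fun i => perm231 n γ i = (i : ℤ))).card ≤ 1 := by
  rw [Finset.card_le_one]
  intro a ha b hb
  rw [Finset.mem_filter] at ha hb
  by_contra hne
  -- wlog a < b
  have key : ∀ i j : ℕ, i ∈ Finset.Icc p q → j ∈ Finset.Icc p q →
      perm231 n γ i = (i : ℤ) → perm231 n γ j = (j : ℤ) → i < j → False := by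
    intro i j hiI hjI hfi hfj hij
    have hiI' := hiI
    have hjI' := hjI
    have hiN := hI hiI
    have hjN := hI hjI
    rw [Finset.mem_Icc] at hiN hjN hiI hjI
    -- bound j - i
    have hcard : (Finset.Icc p q).card = q + 1 - p := Nat.card_Icc p q
    have hpq : p ≤ q := le_trans hiI.1 hiI.2
    have hdiff : ((j : ℝ) - (i : ℝ) + 1) ≤ ((Finset.Icc p q).card : ℝ) := by
      rw [hcard]
      have hnat : j + 1 + p ≤ (q + 1 - p) + i + p := by omega
      have := (Nat.cast_le (α := ℝ)).2 hnat
      push_cast at this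
      linarith
    have hbi : ((j : ℤ) - (i : ℤ) + 1 : ℝ) < ((hgt n γ i : ℤ) : ℝ) := by
      have := hh i hiI'
      push_cast
      linarith
    have hbj : ((j : ℤ) - (i : ℤ) + 1 : ℝ) < ((hgt n γ j : ℤ) : ℝ) := by
      have := hh j hjI'
      push_cast
      linarith
    have hbi' : (j : ℤ) - (i : ℤ) + 1 < hgt n γ i := by exact_mod_cast hbi
    have hbj' : (j : ℤ) - (i : ℤ) + 1 < hgt n γ j := by exact_mod_cast hbj
    exact DyckAux.no_two_fixed hγ hiN.1 hij hjN.2 (by omega) (by omega) hfi hfj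
  rcases Nat.lt_trichotomy a b with h | h | h
  · exact key a b ha.1 hb.1 ha.2 hb.2 h
  · exact hne h
  · exact key b a hb.1 ha.1 hb.2 ha.2 h
end
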